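/- If σ is an intermezzo ordering of the instance (A, C) built in the Multicolor Clique reduction (satisfying B, C^1_sel, C^2_sel, C^3_sel), then for every i ∈ {1,...,k} there exists p_i ∈ {1,...,q} such that in the prefix σ' of σ ending at c^{1,1}: s^i and all elements of U^i_r with r < p_i occur, exactly the element u^i_{p_i,0} of U^i_{p_i} occurs, and no element of U^i_r with r > p_i occurs. -/

import Mathlib

/-- Index type for the elements `c^{i,j}`, `1 ≤ i ≤ j ≤ k` (0-indexed here). -/
abbrev CIdx (k : ℕ) := {p : Fin k × Fin k // p.1 ≤ p.2}

/-- Ground set of the Multicolor Clique reduction: elements `s^i` (`1 ≤ i ≤ k+1`),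
`c^{i,j}` (`1 ≤ i ≤ j ≤ k`) and `u^i_{p,j}` (`1 ≤ i ≤ k`, `1 ≤ p ≤ q`, `0 ≤ j ≤ k`);
all indices are 0-indexed except `j`, which ranges over `0..k` as in the paper. -/
abbrev MCG (k q : ℕ) := Fin (k + 1) ⊕ (CIdx k ⊕ (Fin k × Fin q × Fin (k + 1)))

variable {k q : ℕ}

/-- The element `s^{i+1}` (for 0-indexed `i`). -/
def sE (i : Fin (k + 1)) : MCG k q := Sum.inl i

/-- The element `c^{i+1,j+1}` (for 0-indexed index pair). -/
def cE (c : CIdx k) : MCG k q := Sum.inr (Sum.inl c)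

/-- The element `u^{i+1}_{p+1,j}` (for 0-indexed `i`, `p`; `j` as in the paper). -/
def uE (i : Fin k) (p : Fin q) (j : Fin (k + 1)) : MCG k q :=
  Sum.inr (Sum.inr (i, p, j))

/-- `c^{ℓ+1,m+1}` built from natural number indices. -/
def cP (ℓ m : ℕ) (h1 : ℓ ≤ m) (h2 : m < k) : MCG k q :=
  cE ⟨(⟨ℓ, lt_of_le_of_lt h1 h2⟩, ⟨m, h2⟩), Fin.mk_le_mk.mpr h1⟩

/-- `u^{i+1}_{p+1,j}` built from natural number indices. -/
def uP (i : ℕ) (hi : i < k) (p : Fin q) (j : ℕ) (hj : j < k + 1) : MCG k q :=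
  uE ⟨i, hi⟩ p ⟨j, hj⟩

/-- The pair constraints `B` of the reduction. -/
def Brel : MCG k q → MCG k q → Prop
  | Sum.inl i, Sum.inr (Sum.inr (i', _, _)) => i.val = i'.val
  | Sum.inr (Sum.inr (i, p, j)), Sum.inr (Sum.inr (i', p', j')) =>
      i = i' ∧ (p < p' ∨ (p = p' ∧ j < j'))
  | Sum.inr (Sum.inr (i, p, j)), Sum.inl i' =>
      p.val = 0 ∧ j.val = 0 ∧ i'.val = i.val + 1
  | Sum.inr (Sum.inl c), Sum.inr (Sum.inl c') =>
      c.val.1 < c'.val.1 ∨ (c.val.1 = c'.val.1 ∧ c.val.2 < c'.val.2)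
  | Sum.inl i, Sum.inr (Sum.inl c') =>
      i.val = k ∧ c'.val.1.val = 0 ∧ c'.val.2.val = 0
  | _, _ => False

/-- σ satisfies the pair constraints `B`. -/
def SatB (σ : MCG k q ≃ Fin (Fintype.card (MCG k q))) : Prop :=
  ∀ x y : MCG k q, Brel x y → σ x < σ y

/-- σ fulfills all (intermezzo) triples in `S`. -/
def SatT (σ : MCG k q ≃ Fin (Fintype.card (MCG k q)))
    (S : Set (MCG k q × MCG k q × MCG k q)) : Prop :=
  ∀ t ∈ S, (σ t.1 < σ t.2.1 ∧ σ t.2.1 < σ t.2.2) ∨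
           (σ t.2.1 < σ t.2.2 ∧ σ t.2.2 < σ t.1)

/-- Selection triples `C¹_sel = {(s^{i+1}, u^i_{p,j}, u^i_{p+1,0})}`. -/
def Csel1 : Set (MCG k q × MCG k q × MCG k q) :=
  {t | ∃ (i : Fin k) (p : Fin q) (j : Fin (k + 1)) (hp : p.val + 1 < q),
        1 ≤ j.val ∧
        t = (sE i.succ, uE i p j, uE i ⟨p.val + 1, hp⟩ 0)}

/-- Selection triples `C²_sel = {(u^i_{q,j}, s^i, s^{i+1})}`. -/
def Csel2 (hq : 0 < q) : Set (MCG k q × MCG k q × MCG k q) :=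
  {t | ∃ (i : Fin k) (j : Fin (k + 1)), 1 ≤ j.val ∧
        t = (uE i ⟨q - 1, by omega⟩ j, sE i.castSucc, sE i.succ)}

/-- Selection triples `C³_sel = {(u^i_{p,j}, s^{i+1}, c^{1,1})}`. -/
def Csel3 (hk : 0 < k) : Set (MCG k q × MCG k q × MCG k q) :=
  {t | ∃ (i : Fin k) (p : Fin q) (j : Fin (k + 1)),
        t = (uE i p j, sE i.succ, cP 0 0 le_rfl hk)}

/-- Verification triples `C¹_ver = {(x, c^{i,k}, c^{i+1,i+1})}`. -/
def Cver1 : Set (MCG k q × MCG k q × MCG k q) :=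
  {t | ∃ (i : ℕ) (hi : i + 1 < k) (x : MCG k q),
        x ≠ cP i (k - 1) (by omega) (by omega) ∧
        x ≠ cP (i + 1) (i + 1) le_rfl hi ∧
        t = (x, cP i (k - 1) (by omega) (by omega), cP (i + 1) (i + 1) le_rfl hi)}

/-- Verification triples `C²_ver = {(u^i_{p,j}, c^{ℓ,m}, c^{ℓ,m+1})}` (for the
stated index conditions, written for 0-indexed `i`, `ℓ`, `m`). -/
def Cver2 : Set (MCG k q × MCG k q × MCG k q) :=
  {t | ∃ (i : Fin k) (p : Fin q) (j : Fin (k + 1)) (ℓ m : ℕ)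
        (hℓm : ℓ ≤ m) (hm : m + 1 < k),
        ((i.val ≠ ℓ ∧ i.val ≠ m + 1) ∨ (i.val = m + 1 ∧ j.val ≠ ℓ + 1) ∨
          (i.val = ℓ ∧ j.val ≠ m + 1)) ∧
        t = (uE i p j, cP ℓ m hℓm (by omega), cP ℓ (m + 1) (by omega) hm)}

/-- Verification triples `C³_ver`. -/
def Cver3 : Set (MCG k q × MCG k q × MCG k q) :=
  {t | ∃ (ℓ m : ℕ) (hℓm : ℓ ≤ m) (hm : m + 1 < k) (p : Fin q),
        t = (cP ℓ (m + 1) (by omega) hm, uP ℓ (by omega) p m (by omega),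
             uP ℓ (by omega) p (m + 1) (by omega)) ∨
        t = (cP ℓ (m + 1) (by omega) hm, uP (m + 1) hm p ℓ (by omega),
             uP (m + 1) hm p (ℓ + 1) (by omega))}

/-- Verification triples `C⁴_ver` (depending on the non-edges of `G`). -/
def Cver4 (Gadj : (Fin k × Fin q) → (Fin k × Fin q) → Prop) :
    Set (MCG k q × MCG k q × MCG k q) :=
  {t | ∃ (ℓ m : ℕ) (hℓm : ℓ ≤ m) (hm : m + 1 < k) (p r : Fin q),
        ¬ Gadj (⟨ℓ, by omega⟩, p) (⟨m + 1, hm⟩, r) ∧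
        (t = (uP (m + 1) hm r (ℓ + 1) (by omega), uP ℓ (by omega) p (m + 1) (by omega),
              uP ℓ (by omega) p (m + 2) (by omega)) ∨
         t = (uP ℓ (by omega) p (m + 1) (by omega), uP (m + 1) hm r (ℓ + 1) (by omega),
              uP (m + 1) hm r (ℓ + 2) (by omega)))}

set_option maxHeartbeats 1000000 in
/-- selection-phase property: if σ respects `B` and the
selection triples, then for every color `i` there is an index `p_i` such that,
in the prefix of σ ending at `c^{1,1}`: `s^i` and all of `U^i_r` with `r < p_i`
occur, exactly `u^i_{p_i,0}` occurs from `U^i_{p_i}`, and nothing of `U^i_r`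
with `r > p_i` occurs. -/
theorem stmt12 (hk : 0 < k) (hq : 0 < q)
    (σ : MCG k q ≃ Fin (Fintype.card (MCG k q)))
    (hB : SatB σ)
    (hsel : SatT σ (Csel1 ∪ Csel2 hq ∪ Csel3 hk)) :
    ∀ i : Fin k, ∃ p : Fin q,
      σ (sE i.castSucc) ≤ σ (cP 0 0 le_rfl hk) ∧
      (∀ (p' : Fin q) (j : Fin (k + 1)), p' < p →
        σ (uE i p' j) ≤ σ (cP 0 0 le_rfl hk)) ∧
      (∀ j : Fin (k + 1), σ (uE i p j) ≤ σ (cP 0 0 le_rfl hk) ↔ j = 0) ∧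
      (∀ (p' : Fin q) (j : Fin (k + 1)), p < p' →
        σ (cP 0 0 le_rfl hk) < σ (uE i p' j)) := by
  classical
  intro i
  have hinj : ∀ (p : Fin q) (j : Fin (k + 1)),
      σ (uE i p j) ≠ σ (cP 0 0 le_rfl hk) := by
    intro p j he
    have := σ.injective he
    simp [uE, cP, cE] at this
  have hle_iff : ∀ (p : Fin q) (j : Fin (k + 1)),
      σ (uE i p j) ≤ σ (cP 0 0 le_rfl hk) ↔
        σ (uE i p j) < σ (cP 0 0 le_rfl hk) := by
    intro p j
    exact ⟨fun h => lt_of_le_of_ne h (hinj p j), le_of_lt⟩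
  have hsu : ∀ (i : Fin k) (p : Fin q) (j : Fin (k + 1)),
      σ (sE i.castSucc) < σ (uE i p j) := by
    intro i p j
    exact hB _ _ (by simp [sE, uE, Brel])
  have huu : ∀ (p p' : Fin q) (j j' : Fin (k + 1)),
      (p < p' ∨ (p = p' ∧ j < j')) → σ (uE i p j) < σ (uE i p' j') := by
    intro p p' j j' h
    exact hB _ _ ⟨rfl, h⟩
  have hss : ∀ i : Fin k, σ (sE i.castSucc) < σ (sE i.succ) := by
    intro i
    have hmem : ((uE i ⟨q - 1, by omega⟩ ⟨1, by omega⟩, sE i.castSucc, sE i.succ) :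
        MCG k q × MCG k q × MCG k q) ∈ (Csel1 ∪ Csel2 hq ∪ Csel3 hk : Set _) := by
      left; right
      exact ⟨i, ⟨1, by omega⟩, by simp, rfl⟩
    rcases hsel _ hmem with ⟨h1, _⟩ | ⟨h1, _⟩
    · exact absurd (hsu i _ _) (lt_asymm h1)
    · exact h1
  have hsck : ∀ (j : Fin (k + 1)), j.val = k →
      σ (Sum.inl j : MCG k q) < σ (cP 0 0 le_rfl hk) := by
    intro j hj
    exact hB _ _ (by simp [Brel, cP, cE, hj])
  have hsc : ∀ (j : Fin (k + 1)),
      σ (Sum.inl j : MCG k q) < σ (cP 0 0 le_rfl hk) := by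
    intro j
    obtain ⟨n, hn⟩ : ∃ n, k - j.val ≤ n := ⟨k, by omega⟩
    induction n generalizing j with
    | zero =>
      exact hsck j (by omega)
    | succ n ih =>
      by_cases hjk : j.val = k
      · exact hsck j hjk
      · have hj : j.val < k := by omega
        have h1 := hss ⟨j.val, hj⟩
        have hcast : ((⟨j.val, hj⟩ : Fin k)).castSucc = j := by
          ext; simp
        rw [hcast] at h1
        have h2 := ih (Fin.succ ⟨j.val, hj⟩) (by simp; omega)
        exact lt_trans h1 h2
  have hdich : ∀ (p : Fin q) (j : Fin (k + 1)),
      σ (uE i p j) < σ (sE i.succ) ∨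
        σ (cP 0 0 le_rfl hk) < σ (uE i p j) := by
    intro p j
    have hmem : ((uE i p j, sE i.succ, cP 0 0 le_rfl hk) :
        MCG k q × MCG k q × MCG k q) ∈ (Csel1 ∪ Csel2 hq ∪ Csel3 hk : Set _) :=
      Or.inr ⟨i, p, j, rfl⟩
    rcases hsel _ hmem with ⟨h1, _⟩ | ⟨_, h2⟩
    · exact Or.inl h1
    · exact Or.inr h2
  set P : Finset (Fin q) :=
    Finset.univ.filter (fun p => σ (uE i p 0) < σ (cP 0 0 le_rfl hk)) with hP
  have h00 : σ (uE i ⟨0, hq⟩ (0 : Fin (k + 1))) < σ (sE i.succ) := by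
    refine hB _ _ ?_
    refine ⟨rfl, ?_, ?_⟩ <;> simp [uE, sE]
  have hmem0 : (⟨0, hq⟩ : Fin q) ∈ P := by
    simp only [hP, Finset.mem_filter, Finset.mem_univ, true_and]
    exact lt_trans h00 (hsc i.succ)
  have hPne : P.Nonempty := ⟨_, hmem0⟩
  refine ⟨P.max' hPne, ?_, ?_, ?_, ?_⟩
  · exact le_of_lt (hsc i.castSucc)
  · intro p' j hp'
    have hpP : σ (uE i (P.max' hPne) 0) < σ (cP 0 0 le_rfl hk) := by
      have := P.max'_mem hPne
      simpa [hP] using this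
    exact le_of_lt (lt_trans (huu p' _ j 0 (Or.inl hp')) hpP)
  · intro j
    rw [hle_iff]
    have hpP : σ (uE i (P.max' hPne) 0) < σ (cP 0 0 le_rfl hk) := by
      have := P.max'_mem hPne
      simpa [hP] using this
    constructor
    · intro hj
      by_contra hj0
      have hj1 : 1 ≤ j.val := by
        have : j.val ≠ 0 := fun h => hj0 (by ext; simpa using h)
        omega
      set p := P.max' hPne with hpdef
      have hus : σ (uE i p j) < σ (sE i.succ) := by
        rcases hdich p j with h | h
        · exact h
        · exact absurd hj (not_lt.mpr (le_of_lt h))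
      by_cases hpq : p.val + 1 < q
      · have hmem : ((sE i.succ, uE i p j, uE i ⟨p.val + 1, hpq⟩ 0) :
            MCG k q × MCG k q × MCG k q) ∈ (Csel1 ∪ Csel2 hq ∪ Csel3 hk : Set _) :=
          Or.inl (Or.inl ⟨i, p, j, hpq, hj1, rfl⟩)
        rcases hsel _ hmem with ⟨h1, _⟩ | ⟨_, h2⟩
        · exact absurd h1 (lt_asymm hus)
        · have hmemP : (⟨p.val + 1, hpq⟩ : Fin q) ∈ P := by
            simp only [hP, Finset.mem_filter, Finset.mem_univ, true_and]
            exact lt_trans h2 (hsc i.succ)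
          have hle := P.le_max' _ hmemP
          rw [← hpdef] at hle
          exact absurd hle (by simp [Fin.le_def])
      · have hlt : p.val < q := p.isLt
        have hge : q ≤ p.val + 1 := not_lt.mp hpq
        have hqe : p.val = q - 1 := by omega
        have hpq' : p = ⟨q - 1, by omega⟩ := Fin.ext hqe
        have hmem : ((uE i ⟨q - 1, by omega⟩ j, sE i.castSucc, sE i.succ) :
            MCG k q × MCG k q × MCG k q) ∈ (Csel1 ∪ Csel2 hq ∪ Csel3 hk : Set _) :=
          Or.inl (Or.inr ⟨i, j, hj1, rfl⟩)
        rcases hsel _ hmem with ⟨h1, _⟩ | ⟨_, h2⟩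
        · exact absurd h1 (lt_asymm (hsu i _ j))
        · rw [hpq'] at hus
          exact absurd h2 (lt_asymm hus)
    · rintro rfl
      exact hpP
  · intro p' j hp'
    have hnot : ¬ σ (uE i p' 0) < σ (cP 0 0 le_rfl hk) := by
      intro h
      have hmemP : p' ∈ P := by
        simp only [hP, Finset.mem_filter, Finset.mem_univ, true_and]
        exact h
      exact absurd hp' (not_lt.mpr (P.le_max' _ hmemP))
    have h0 : σ (cP 0 0 le_rfl hk) < σ (uE i p' 0) :=
      lt_of_le_of_ne (not_lt.mp hnot) ((hinj p' 0).symm)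
    by_cases hj0 : j = 0
    · rw [hj0]; exact h0
    · refine lt_trans h0 (huu p' p' 0 j (Or.inr ⟨rfl, ?_⟩))
      have : j.val ≠ 0 := fun h => hj0 (by ext; simpa using h)
      exact Fin.pos_iff_ne_zero.mpr hj0
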